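/- Let G and H be finite connected simple graphs, fix a root (r_G, r_H) of G□H, and let c be a pebbling configuration on G□H. If Σ_{j ∈ V(H)\{r_H}} ( Σ_{i∈V(G)} ⌊c(i,j) / 2^{dist_H(j, r_H)}⌋ ) + c̃_{r_H} ≥ π(G), then c is (r_G, r_H)-solvable. -/

import Mathlib

open SimpleGraph Finset

/-- A single pebbling move on `G`: remove two pebbles from a vertex `v` with at least two
pebbles and add one pebble to an adjacent vertex `w`. -/
def PebblingMove {V : Type*} (G : SimpleGraph V) (c c' : V → ℕ) : Prop :=
  ∃ v w, G.Adj v w ∧ 2 ≤ c v ∧ c' v = c v - 2 ∧ c' w = c w + 1 ∧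
    ∀ u, u ≠ v → u ≠ w → c' u = c u

/-- Some finite sequence of pebbling moves starting from `c` places at least `t` pebbles
on the vertex `r`. -/
def NSolvable {V : Type*} (G : SimpleGraph V) (c : V → ℕ) (r : V) (t : ℕ) : Prop :=
  ∃ c', Relation.ReflTransGen (PebblingMove G) c c' ∧ t ≤ c' r

/-- A configuration `c` is `r`-solvable. -/
def Solvable {V : Type*} (G : SimpleGraph V) (c : V → ℕ) (r : V) : Prop :=
  NSolvable G c r 1

/-- The pebbling number `π(G)`: least `k` such that every configuration of size `k` is
`r`-solvable for every root `r`. -/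
noncomputable def pebblingNumber {V : Type*} (G : SimpleGraph V) [Fintype V] : ℕ :=
  sInf {k | ∀ c : V → ℕ, (∑ v, c v) = k → ∀ r, Solvable G c r}

/-- The 2-pebbling number `π₂(G, s)`: least `m` such that for every root `r`, every
configuration of size at least `m` with support of size exactly `s` can place two pebbles
on `r`. -/
noncomputable def twoPebblingNumber {V : Type*} (G : SimpleGraph V) [Fintype V] (s : ℕ) : ℕ :=
  sInf {m | ∀ (r : V) (c : V → ℕ), m ≤ ∑ v, c v →
    (Finset.univ.filter fun v => 1 ≤ c v).card = s → NSolvable G c r 2}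

section Aux

variable {γ : Type*} {K : SimpleGraph γ}

/-- `k` pebbling moves along a single edge. -/
lemma pebb_pump {u v : γ} (h : K.Adj u v) :
    ∀ (k : ℕ) (c : γ → ℕ), 2 * k ≤ c u →
      ∃ c', Relation.ReflTransGen (PebblingMove K) c c' ∧
        c' u = c u - 2 * k ∧ c' v = c v + k ∧ ∀ x, x ≠ u → x ≠ v → c' x = c x := by
  classical
  intro k
  induction k with
  | zero => intro c _; exact ⟨c, .refl, by omega, by omega, fun _ _ _ => rfl⟩
  | succ k ih =>
    intro c hc
    set c₁ : γ → ℕ := fun x => if x = u then c u - 2 else if x = v then c v + 1 else c x with hc₁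
    have huv : u ≠ v := h.ne
    have hmove : PebblingMove K c c₁ := by
      refine ⟨u, v, h, by omega, ?_, ?_, ?_⟩
      · simp [hc₁]
      · simp [hc₁, huv.symm]
      · intro x hx1 hx2; simp [hc₁, hx1, hx2]
    have h1u : c₁ u = c u - 2 := by simp [hc₁]
    have h1v : c₁ v = c v + 1 := by simp [hc₁, huv.symm]
    obtain ⟨c', hrtg, h2u, h2v, h2x⟩ := ih c₁ (by omega)
    refine ⟨c', .head hmove hrtg, by omega, by omega, ?_⟩
    intro x hx1 hx2
    rw [h2x x hx1 hx2]; simp [hc₁, hx1, hx2]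

/-- Send one pebble along a path using `2 ^ length` pebbles from the start; all other
vertices (including the interior of the path) are left unchanged. -/
lemma pebb_sendOne {u r : γ} (p : K.Walk u r) :
    p.IsPath → u ≠ r → ∀ c : γ → ℕ, 2 ^ p.length ≤ c u →
      ∃ c', Relation.ReflTransGen (PebblingMove K) c c' ∧
        c' r = c r + 1 ∧ c' u = c u - 2 ^ p.length ∧ ∀ x, x ≠ u → x ≠ r → c' x = c x := by
  induction p with
  | nil => intro _ hur; exact absurd rfl hur
  | @cons u v r h p ih =>
    intro hp hur c hc
    have hpl : (SimpleGraph.Walk.cons h p).length = p.length + 1 := by simp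
    rw [hpl] at hc ⊢
    have hpow : (2:ℕ) ^ (p.length + 1) = 2 * 2 ^ p.length := by ring
    obtain ⟨c₁, hrtg₁, h1u, h1v, h1x⟩ := pebb_pump h (2 ^ p.length) c (by omega)
    rcases eq_or_ne v r with rfl | hvr
    · have hnil : p = SimpleGraph.Walk.nil := SimpleGraph.Walk.isPath_iff_eq_nil.mp
        ((SimpleGraph.Walk.cons_isPath_iff h p).mp hp).1
      subst hnil
      simp only [SimpleGraph.Walk.length_nil, pow_zero, pow_one] at *
      exact ⟨c₁, hrtg₁, by omega, by omega, h1x⟩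
    · have hpp : p.IsPath := ((SimpleGraph.Walk.cons_isPath_iff h p).mp hp).1
      have huv : u ≠ v := h.ne
      obtain ⟨c₂, hrtg₂, h2r, h2v, h2x⟩ := ih hpp hvr c₁ (by omega)
      refine ⟨c₂, hrtg₁.trans hrtg₂, ?_, ?_, ?_⟩
      · rw [h2r, h1x r (Ne.symm hur) (Ne.symm hvr)]
      · rw [h2x u huv hur, h1u, hpow]
      · intro x hx1 hx2
        rcases eq_or_ne x v with rfl | hxv
        · rw [h2v, h1v]; omega
        · rw [h2x x hxv hx2, h1x x hx1 hxv]

/-- Send `m` pebbles along a path, using `m * 2 ^ length` pebbles from the start. -/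
lemma pebb_sendMany {u r : γ} (p : K.Walk u r) (hp : p.IsPath) (hur : u ≠ r) :
    ∀ (m : ℕ) (c : γ → ℕ), m * 2 ^ p.length ≤ c u →
      ∃ c', Relation.ReflTransGen (PebblingMove K) c c' ∧
        c' r = c r + m ∧ c' u = c u - m * 2 ^ p.length ∧ ∀ x, x ≠ u → x ≠ r → c' x = c x := by
  intro m
  induction m with
  | zero => intro c _; exact ⟨c, .refl, by omega, by omega, fun _ _ _ => rfl⟩
  | succ m ih =>
    intro c hc
    have hmul : (m + 1) * 2 ^ p.length = 2 ^ p.length + m * 2 ^ p.length := by ring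
    obtain ⟨c₁, hrtg₁, h1r, h1u, h1x⟩ := pebb_sendOne p hp hur c (by omega)
    obtain ⟨c₂, hrtg₂, h2r, h2u, h2x⟩ := ih c₁ (by omega)
    refine ⟨c₂, hrtg₁.trans hrtg₂, by omega, by omega, ?_⟩
    intro x hx1 hx2; rw [h2x x hx1 hx2, h1x x hx1 hx2]

end Aux

section Lift

variable {γ δ : Type*} {K : SimpleGraph γ} {L : SimpleGraph δ} {φ : γ → δ}

/-- Lift a sequence of pebbling moves along an injective adjacency-preserving map,
starting from any dominating configuration. -/
lemma pebb_lift (hinj : Function.Injective φ)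
    (hadj : ∀ {a b : γ}, K.Adj a b → L.Adj (φ a) (φ b)) {c d : γ → ℕ}
    (hcd : Relation.ReflTransGen (PebblingMove K) c d) :
    ∀ C : δ → ℕ, (∀ i, c i ≤ C (φ i)) →
      ∃ D, Relation.ReflTransGen (PebblingMove L) C D ∧ ∀ i, d i ≤ D (φ i) := by
  classical
  induction hcd using Relation.ReflTransGen.head_induction_on with
  | refl => exact fun C hC => ⟨C, .refl, hC⟩
  | head hmove _ ih =>
    rename_i a b _
    intro C hC
    obtain ⟨v, w, hvw, h2, hbv, hbw, hbx⟩ := hmove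
    have hvw' : v ≠ w := hvw.ne
    set C' : δ → ℕ := fun x => if x = φ v then C (φ v) - 2 else if x = φ w then C (φ w) + 1 else C x
      with hC'
    have hfvw : φ v ≠ φ w := fun e => hvw' (hinj e)
    have hmove' : PebblingMove L C C' := by
      refine ⟨φ v, φ w, hadj hvw, le_trans h2 (hC v), by simp [hC'], by simp [hC', hfvw.symm], ?_⟩
      intro x hx1 hx2; simp [hC', hx1, hx2]
    have hdom : ∀ i, b i ≤ C' (φ i) := by
      intro i
      rcases eq_or_ne i v with rfl | hiv
      · have := hC i; simp [hC', hbv]; omega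
      · rcases eq_or_ne i w with rfl | hiw
        · have := hC i; simp [hC', hfvw.symm, hbw]; omega
        · have h1 : φ i ≠ φ v := fun e => hiv (hinj e)
          have h2' : φ i ≠ φ w := fun e => hiw (hinj e)
          rw [hbx i hiv hiw]; simp [hC', h1, h2']; exact hC i
    obtain ⟨D, hrtg, hD⟩ := ih C' hdom
    exact ⟨D, .head hmove' hrtg, hD⟩

end Lift

/-- Trim a configuration down to a given total. -/
lemma pebb_trim {ι : Type*} [Fintype ι] :
    ∀ (d : ℕ) (c : ι → ℕ) (k : ℕ), (∑ i, c i) = k + d →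
      ∃ c' : ι → ℕ, (∀ i, c' i ≤ c i) ∧ (∑ i, c' i) = k := by
  classical
  intro d
  induction d with
  | zero => intro c k h; exact ⟨c, fun _ => le_rfl, by omega⟩
  | succ d ih =>
    intro c k h
    have : ∃ v, 0 < c v := by
      by_contra hcon
      push_neg at hcon
      have : ∑ i, c i = 0 := Finset.sum_eq_zero (fun i _ => by have := hcon i; omega)
      omega
    obtain ⟨v, hv⟩ := this
    set c₁ : ι → ℕ := Function.update c v (c v - 1) with hc₁
    have hpt : ∀ i, c i = c₁ i + (if i = v then 1 else 0) := by
      intro i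
      rcases eq_or_ne i v with rfl | hiv
      · simp [hc₁]; omega
      · simp [hc₁, hiv]
    have hsum : ∑ i, c₁ i = k + d := by
      have hs : ∑ i, c i = (∑ i, c₁ i) + ∑ i, (if i = v then 1 else 0) := by
        rw [← Finset.sum_add_distrib]; exact Finset.sum_congr rfl (fun i _ => hpt i)
      rw [Finset.sum_ite_eq' Finset.univ v (fun _ => 1)] at hs
      simp at hs
      omega
    obtain ⟨c', hle, hsum'⟩ := ih c₁ k hsum
    refine ⟨c', fun i => le_trans (hle i) ?_, hsum'⟩
    rcases eq_or_ne i v with rfl | hiv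
    · simp [hc₁]
    · simp [hc₁, hiv]

/-- Any sufficiently large configuration on a connected graph is solvable. -/
lemma pebb_big {α : Type*} [Fintype α] (G : SimpleGraph α) (hG : G.Connected) (c : α → ℕ)
    (hc : Fintype.card α * 2 ^ Fintype.card α ≤ ∑ v, c v) (r : α) : Solvable G c r := by
  have hne : Nonempty α := hG.nonempty
  have hcard : 0 < Fintype.card α := Fintype.card_pos
  have hv : ∃ v, 2 ^ Fintype.card α ≤ c v := by
    by_contra hcon
    push_neg at hcon
    have hlt : ∑ v, c v < ∑ _v : α, 2 ^ Fintype.card α :=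
      Finset.sum_lt_sum_of_nonempty Finset.univ_nonempty (fun i _ => hcon i)
    rw [Finset.sum_const, Finset.card_univ, smul_eq_mul] at hlt
    omega
  obtain ⟨v, hv⟩ := hv
  have hone : (1:ℕ) ≤ 2 ^ Fintype.card α := Nat.one_le_two_pow
  rcases eq_or_ne v r with rfl | hvr
  · exact ⟨c, .refl, by omega⟩
  · obtain ⟨p, hp, _⟩ := (hG.preconnected v r).exists_path_of_dist
    have hlen : p.length < Fintype.card α := hp.length_lt
    have hpow : (2:ℕ) ^ p.length ≤ 2 ^ Fintype.card α :=
      Nat.pow_le_pow_right (by norm_num) hlen.le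
    obtain ⟨c', hrtg, hcr, _, _⟩ := pebb_sendOne p hp hvr c (le_trans hpow hv)
    exact ⟨c', hrtg, by omega⟩

/-- Any configuration of size at least the pebbling number is solvable. -/
lemma pebb_spec {α : Type*} [Fintype α] (G : SimpleGraph α) (hG : G.Connected) (c : α → ℕ)
    (h : pebblingNumber G ≤ ∑ v, c v) (r : α) : Solvable G c r := by
  have hne : {k | ∀ c : α → ℕ, (∑ v, c v) = k → ∀ r, Solvable G c r}.Nonempty :=
    ⟨Fintype.card α * 2 ^ Fintype.card α, fun c hc r => pebb_big G hG c hc.ge r⟩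
  have hmem := Nat.sInf_mem hne
  obtain ⟨d, hd⟩ := Nat.le.dest h
  obtain ⟨c', hle, hsum⟩ := pebb_trim d c (pebblingNumber G) hd.symm
  obtain ⟨d₀, hrtg, hd₀⟩ := hmem c' hsum r
  obtain ⟨D, hrtgD, hD⟩ :=
    pebb_lift (Function.injective_id) (fun hab => hab) hrtg c hle
  exact ⟨D, hrtgD, le_trans hd₀ (hD r)⟩

/-- Gather the stacks of the vertices in `T` (all off the root slice) into the root
slice of the box product. -/
lemma pebb_gather {α β : Type*} [Fintype α] [Fintype β] [DecidableEq α] [DecidableEq β]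
    (G : SimpleGraph α) (H : SimpleGraph β) (hH : H.Connected)
    (c : α × β → ℕ) (rH : β) (T : Finset (α × β)) (hT : ∀ u ∈ T, u.2 ≠ rH) :
    ∃ C : α × β → ℕ, Relation.ReflTransGen (PebblingMove (G.boxProd H)) c C ∧
      (∀ i : α, C (i, rH) = c (i, rH) +
        ∑ u ∈ T, (if u.1 = i then c u / 2 ^ H.dist u.2 rH else 0)) ∧
      (∀ u : α × β, u.2 ≠ rH → u ∉ T → C u = c u) := by
  classical
  induction T using Finset.induction with
  | empty => exact ⟨c, .refl, fun i => by simp, fun u _ _ => rfl⟩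
  | @insert a T ha ih =>
    obtain ⟨C, hrtg, hC1, hC2⟩ := ih (fun u hu => hT u (Finset.mem_insert_of_mem hu))
    obtain ⟨i₀, j₀⟩ := a
    have hj₀ : j₀ ≠ rH := hT (i₀, j₀) (Finset.mem_insert_self _ _)
    obtain ⟨q, hq, hqlen⟩ := (hH.preconnected j₀ rH).exists_path_of_dist
    set P : (G.boxProd H).Walk (i₀, j₀) (i₀, rH) := q.boxProdRight G i₀ with hP
    have hinjmap : Function.Injective ((SimpleGraph.boxProdRight G H i₀).toHom : β → α × β) :=
      fun b b' e => congrArg Prod.snd e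
    have hPpath : P.IsPath := q.map_isPath_of_injective hinjmap hq
    have hPlen : P.length = H.dist j₀ rH := by
      rw [hP, ← hqlen]; exact SimpleGraph.Walk.length_map ..
    have hne : ((i₀, j₀) : α × β) ≠ (i₀, rH) := by simp [hj₀]
    have hCa : C (i₀, j₀) = c (i₀, j₀) := hC2 _ hj₀ ha
    have hle : (c (i₀, j₀) / 2 ^ H.dist j₀ rH) * 2 ^ P.length ≤ C (i₀, j₀) := by
      rw [hPlen, hCa]; exact Nat.div_mul_le_self _ _
    obtain ⟨C', hrtg', h'r, h'a, h'x⟩ :=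
      pebb_sendMany P hPpath hne (c (i₀, j₀) / 2 ^ H.dist j₀ rH) C hle
    refine ⟨C', hrtg.trans hrtg', ?_, ?_⟩
    · intro i
      rw [Finset.sum_insert ha]
      rcases eq_or_ne i i₀ with rfl | hii
      · rw [h'r, hC1 i]
        have hterm : (if ((i, j₀) : α × β).1 = i then c (i, j₀) / 2 ^ H.dist ((i, j₀) : α × β).2 rH
            else 0) = c (i, j₀) / 2 ^ H.dist j₀ rH := by simp
        rw [hterm]
        omega
      · have h1 : ((i, rH) : α × β) ≠ (i₀, j₀) := by simp [Ne.symm hj₀]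
        have h2 : ((i, rH) : α × β) ≠ (i₀, rH) := by simp [hii]
        rw [h'x _ h1 h2, hC1 i]
        simp [Ne.symm hii]
    · intro u hu2 hu
      have hu1 : u ≠ (i₀, j₀) := fun e => hu (e ▸ Finset.mem_insert_self _ _)
      have hu3 : u ≠ (i₀, rH) := fun e => hu2 (by rw [e])
      rw [h'x u hu1 hu3, hC2 u hu2 (fun h => hu (Finset.mem_insert_of_mem h))]

/-- constraint B.2(K) is valid: if the stacks at the non-root slices
(counted toward the root slice) together with the pebbles already on the root slice
number at least `π(G)`, the configuration is solvable. -/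
theorem stmt10 {α β : Type*} [Fintype α] [Fintype β] [DecidableEq β]
    (G : SimpleGraph α) (H : SimpleGraph β) (hG : G.Connected) (hH : H.Connected)
    (c : α × β → ℕ) (rG : α) (rH : β)
    (h : (∑ j ∈ (Finset.univ \ {rH} : Finset β),
          ∑ i : α, c (i, j) / 2 ^ (H.dist j rH))
        + (∑ i : α, c (i, rH)) ≥ pebblingNumber G) :
    Solvable (G.boxProd H) c (rG, rH) := by
  classical
  set T : Finset (α × β) := (Finset.univ ×ˢ (Finset.univ \ {rH})) with hTdef
  have hT : ∀ u ∈ T, u.2 ≠ rH := by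
    intro u hu
    rw [hTdef, Finset.mem_product, Finset.mem_sdiff, Finset.mem_singleton] at hu
    exact hu.2.2
  obtain ⟨C, hrtg, hC1, -⟩ := pebb_gather G H hH c rH T hT
  set c₀ : α → ℕ := fun i => C (i, rH) with hc₀
  have e1 : ∑ i, c₀ i = (∑ i, c (i, rH)) +
      ∑ i : α, ∑ u ∈ T, (if u.1 = i then c u / 2 ^ H.dist u.2 rH else 0) := by
    rw [← Finset.sum_add_distrib]
    exact Finset.sum_congr rfl (fun i _ => hC1 i)
  have e2 : ∑ i : α, ∑ u ∈ T, (if u.1 = i then c u / 2 ^ H.dist u.2 rH else 0)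
      = ∑ u ∈ T, c u / 2 ^ H.dist u.2 rH := by
    rw [Finset.sum_comm]
    refine Finset.sum_congr rfl (fun u _ => ?_)
    rw [Finset.sum_ite_eq Finset.univ u.1 (fun _ => c u / 2 ^ H.dist u.2 rH)]
    simp
  have e3 : ∑ u ∈ T, c u / 2 ^ H.dist u.2 rH
      = ∑ j ∈ (Finset.univ \ {rH} : Finset β), ∑ i : α, c (i, j) / 2 ^ H.dist j rH := by
    rw [hTdef, Finset.sum_product]
    exact Finset.sum_comm
  have hsum : pebblingNumber G ≤ ∑ i, c₀ i := by omega
  obtain ⟨d₀, hrtg₀, hd₀⟩ := pebb_spec G hG c₀ hsum rG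
  have hinj : Function.Injective (fun i : α => ((i, rH) : α × β)) :=
    fun a b e => congrArg Prod.fst e
  have hadj : ∀ {a b : α}, G.Adj a b →
      (G.boxProd H).Adj ((fun i : α => ((i, rH) : α × β)) a) ((fun i : α => ((i, rH) : α × β)) b) :=
    fun hab => SimpleGraph.boxProd_adj_left.mpr hab
  obtain ⟨D, hrtgD, hD⟩ := pebb_lift hinj hadj hrtg₀ C (fun i => le_of_eq rfl)
  exact ⟨D, hrtg.trans hrtgD, le_trans hd₀ (hD rG)⟩
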